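/- Let N ≥ 1, let λ_1,…,λ_N be pairwise distinct positive reals, c_1,…,c_N positive reals, and (δ^{(ℓ)})_{ℓ≥0} a real sequence with λ_j + δ^{(ℓ)} > 0 for all j and ℓ, converging to a limit δ* satisfying 1 + δ*/λ_1 > 1 + δ*/λ_2 > ⋯ > 1 + δ*/λ_N > 0. Define moments μ_i^{(s,n)} := Σ_{j=1}^N c_j λ_j^{i+s} Π_{ℓ=0}^{n−1} (λ_j + δ^{(ℓ)}) and Hankel determinants τ_0^{(s,n)} := 1, τ_i^{(s,n)} := det(μ_{j+k}^{(s,n)})_{j,k=0}^{i−1}. Then for every fixed s̄ ∈ ℤ and every i = 0,1,…,N−1, the ratio τ_i^{(−n+s̄,n)} / { Π_{k=1}^{i} [ c_k λ_k^{s̄} Π_{ℓ=0}^{n−1} (1 + δ^{(ℓ)}/λ_k) ] · Π_{1 ≤ k < ℓ ≤ i} (λ_k − λ_ℓ)² } tends to 1 as n → ∞. -/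

import Mathlib

open Finset Filter

lemma prodZero (q : ℕ → ℝ) (hq : ∀ l, 0 < q l) (ρ : ℝ) (hρ : ρ < 1)
    (hlim : Tendsto q atTop (nhds ρ)) :
    Tendsto (fun n => ∏ l ∈ range n, q l) atTop (nhds 0) := by
  have hρ0 : 0 ≤ ρ := ge_of_tendsto' hlim (fun l => (hq l).le)
  set cc : ℝ := (ρ + 1) / 2 with hcc
  have hcρ : ρ < cc := by rw [hcc]; linarith
  have hc1 : cc < 1 := by rw [hcc]; linarith
  have hc0 : 0 < cc := by rw [hcc]; linarith
  obtain ⟨L, hL⟩ := (hlim.eventually (gt_mem_nhds hcρ)).exists_forall_of_atTop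
  apply squeeze_zero' (g := fun n => ((∏ l ∈ range L, q l) / cc ^ L) * cc ^ n)
  · exact Eventually.of_forall fun n => Finset.prod_nonneg fun l _ => (hq l).le
  · filter_upwards [eventually_ge_atTop L] with n hn
    have hsplit : (∏ l ∈ range L, q l) * ∏ l ∈ Ico L n, q l = ∏ l ∈ range n, q l := by
      simp only [Finset.range_eq_Ico]
      exact Finset.prod_Ico_consecutive q (Nat.zero_le L) hn
    have hbound : ∏ l ∈ Ico L n, q l ≤ cc ^ (n - L) := by
      calc ∏ l ∈ Ico L n, q l ≤ ∏ l ∈ Ico L n, cc := by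
            apply Finset.prod_le_prod (fun l _ => (hq l).le)
            intro l hl
            exact (hL l (Finset.mem_Ico.mp hl).1).le
        _ = cc ^ (n - L) := by rw [Finset.prod_const, Nat.card_Ico]
    have h0 : 0 ≤ ∏ l ∈ range L, q l := Finset.prod_nonneg fun l _ => (hq l).le
    calc ∏ l ∈ range n, q l = (∏ l ∈ range L, q l) * ∏ l ∈ Ico L n, q l := hsplit.symm
      _ ≤ (∏ l ∈ range L, q l) * cc ^ (n - L) := mul_le_mul_of_nonneg_left hbound h0
      _ = ((∏ l ∈ range L, q l) / cc ^ L) * cc ^ n := by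
          have : cc ^ (n - L) = cc ^ n / cc ^ L := pow_sub₀ cc hc0.ne' hn
          rw [this]; ring
  · have := (tendsto_pow_atTop_nhds_zero_of_lt_one hc0.le hc1).const_mul
      ((∏ l ∈ range L, q l) / cc ^ L)
    simpa using this

lemma prodA (i : ℕ) (lam w : ℕ → ℝ) (T : Finset ℕ) :
    Matrix.det (Matrix.of fun j k : Fin i => ∑ m ∈ T, w m * lam m ^ (j:ℕ) * lam m ^ (k:ℕ))
      = ∑ f ∈ Fintype.piFinset (fun _ : Fin i => T),
          (∏ j : Fin i, w (f j) * lam (f j) ^ (j:ℕ)) *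
            ∏ j : Fin i, ∏ k ∈ Finset.Ioi j, (lam (f k) - lam (f j)) := by
  have h1 : Matrix.det (Matrix.of fun j k : Fin i => ∑ m ∈ T, w m * lam m ^ (j:ℕ) * lam m ^ (k:ℕ))
      = (Matrix.detRowAlternating (R := ℝ) (n := Fin i)).toMultilinearMap
          (fun j : Fin i => ∑ m ∈ T, (fun k : Fin i => w m * lam m ^ (j:ℕ) * lam m ^ (k:ℕ))) := by
    have hM : (Matrix.of fun j k : Fin i => ∑ m ∈ T, w m * lam m ^ (j:ℕ) * lam m ^ (k:ℕ))
        = fun j : Fin i => ∑ m ∈ T, (fun k : Fin i => w m * lam m ^ (j:ℕ) * lam m ^ (k:ℕ)) := by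
      funext j k
      simp [Finset.sum_apply]
    show Matrix.det _ = _
    rw [show (Matrix.det (Matrix.of fun j k : Fin i => ∑ m ∈ T, w m * lam m ^ (j:ℕ) * lam m ^ (k:ℕ))) = (Matrix.detRowAlternating (R := ℝ) (n := Fin i)).toMultilinearMap (Matrix.of fun j k : Fin i => ∑ m ∈ T, w m * lam m ^ (j:ℕ) * lam m ^ (k:ℕ)) from rfl, hM]
  rw [h1, MultilinearMap.map_sum_finset]
  apply Finset.sum_congr rfl
  intro f _
  have h2 : (Matrix.detRowAlternating (R := ℝ) (n := Fin i)).toMultilinearMap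
        (fun j : Fin i => (fun k : Fin i => w (f j) * lam (f j) ^ (j:ℕ) * lam (f j) ^ (k:ℕ)))
      = Matrix.det (Matrix.of fun j k : Fin i =>
          (w (f j) * lam (f j) ^ (j:ℕ)) * Matrix.vandermonde (fun j => lam (f j)) j k) := rfl
  rw [h2, Matrix.det_mul_column, Matrix.det_vandermonde]

/-- Moments μ_i^{(s,n)} := Σ_{j=1}^N c_j λ_j^{i+s} Π_{ℓ=0}^{n−1}(λ_j + δ^{(ℓ)}). -/
noncomputable def mom (N : ℕ) (lam c : ℕ → ℝ) (δ : ℕ → ℝ) (i : ℕ) (s : ℤ) (n : ℕ) : ℝ :=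
  ∑ j ∈ Finset.Icc 1 N, c j * lam j ^ ((i : ℤ) + s) * ∏ l ∈ Finset.range n, (lam j + δ l)

/-- Hankel determinants τ_i^{(s,n)}. -/
noncomputable def tauH (N : ℕ) (lam c : ℕ → ℝ) (δ : ℕ → ℝ) (i : ℕ) (s : ℤ) (n : ℕ) : ℝ :=
  Matrix.det (Matrix.of fun j k : Fin i => mom N lam c δ (j.1 + k.1) s n)

theorem stmt18 (N : ℕ) (hN : 1 ≤ N) (lam c : ℕ → ℝ) (δ : ℕ → ℝ) (δs : ℝ)
    (hlampos : ∀ j ∈ Finset.Icc 1 N, 0 < lam j)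
    (hdist : ∀ j ∈ Finset.Icc 1 N, ∀ k ∈ Finset.Icc 1 N, j ≠ k → lam j ≠ lam k)
    (hcpos : ∀ j ∈ Finset.Icc 1 N, 0 < c j)
    (hδpos : ∀ j ∈ Finset.Icc 1 N, ∀ l : ℕ, 0 < lam j + δ l)
    (hδlim : Tendsto δ atTop (nhds δs))
    (hchain : ∀ j, 1 ≤ j → j < N → 1 + δs / lam (j + 1) < 1 + δs / lam j)
    (hlast : 0 < 1 + δs / lam N) :
    ∀ (sb : ℤ) (i : ℕ), i ≤ N - 1 →
      Tendsto (fun n : ℕ =>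
          tauH N lam c δ i (-(n : ℤ) + sb) n /
            ((∏ k ∈ Finset.Icc 1 i,
                (c k * lam k ^ sb * ∏ l ∈ Finset.range n, (1 + δ l / lam k))) *
              ∏ k ∈ Finset.Icc 1 i, ∏ l ∈ Finset.Icc (k + 1) i, (lam k - lam l) ^ 2))
        atTop (nhds 1) := by
  intro sb i hi
  have hiN : i < N := by omega
  -- basic positivity
  set P : ℕ → ℕ → ℝ := fun m n => ∏ l ∈ Finset.range n, (1 + δ l / lam m) with hP
  set w : ℕ → ℕ → ℝ := fun m n => c m * lam m ^ sb * P m n with hw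
  set V2 : ℝ := ∏ k ∈ Finset.Icc 1 i, ∏ l ∈ Finset.Icc (k + 1) i, (lam k - lam l) ^ 2 with hV2
  have hsub : Finset.Icc 1 i ⊆ Finset.Icc 1 N := Finset.Icc_subset_Icc_right (by omega)
  have hterm_pos : ∀ m ∈ Finset.Icc 1 N, ∀ l, 0 < 1 + δ l / lam m := by
    intro m hm l
    have h1 : 0 < lam m := hlampos m hm
    have h2 : 0 < lam m + δ l := hδpos m hm l
    have : 1 + δ l / lam m = (lam m + δ l) / lam m := by field_simp
    rw [this]; positivity
  have hPpos : ∀ m ∈ Finset.Icc 1 N, ∀ n, 0 < P m n := by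
    intro m hm n
    exact Finset.prod_pos fun l _ => hterm_pos m hm l
  have hwpos : ∀ m ∈ Finset.Icc 1 N, ∀ n, 0 < w m n := by
    intro m hm n
    have := hcpos m hm
    have := hlampos m hm
    have := hPpos m hm n
    have : (0:ℝ) < lam m ^ sb := zpow_pos (hlampos m hm) sb
    positivity
  -- limits chain
  have hdec : ∀ a b, 1 ≤ b → b ≤ a → a ≤ N → 1 + δs / lam a ≤ 1 + δs / lam b := by
    intro a b hb hba haN
    induction a with
    | zero => omega
    | succ t ih =>
      rcases Nat.eq_or_lt_of_le hba with h | h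
      · rw [← h]
      · have ht : b ≤ t := by omega
        have := ih ht (by omega)
        have hc := hchain t (by omega) (by omega)
        linarith
  have hposlim : ∀ b ∈ Finset.Icc 1 N, 0 < 1 + δs / lam b := by
    intro b hb
    rcases Finset.mem_Icc.mp hb with ⟨h1, h2⟩
    have := hdec N b h1 h2 le_rfl
    linarith
  have hstrict : ∀ a b, 1 ≤ b → b < a → a ≤ N → 1 + δs / lam a < 1 + δs / lam b := by
    intro a b hb hba haN
    have h1 := hchain b hb (by omega)
    have h2 := hdec a (b+1) (by omega) (by omega) haN
    linarith
  -- ratio of P's tend to 0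
  have hPratio : ∀ a ∈ Finset.Icc 1 N, ∀ b ∈ Finset.Icc 1 N, b < a →
      Tendsto (fun n => P a n / P b n) atTop (nhds 0) := by
    intro a ha b hb hba
    have heq : ∀ n, P a n / P b n = ∏ l ∈ range n, ((1 + δ l / lam a) / (1 + δ l / lam b)) := by
      intro n
      rw [hP]
      exact (Finset.prod_div_distrib _ _).symm
    simp only [heq]
    apply prodZero
    · intro l
      exact div_pos (hterm_pos a ha l) (hterm_pos b hb l)
    · show (1 + δs / lam a) / (1 + δs / lam b) < 1
      rw [div_lt_one (hposlim b hb)]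
      exact hstrict a b (Finset.mem_Icc.mp hb).1 hba (Finset.mem_Icc.mp ha).2
    · apply Tendsto.div
      · exact tendsto_const_nhds.add (hδlim.div_const (lam a))
      · exact tendsto_const_nhds.add (hδlim.div_const (lam b))
      · exact (hposlim b hb).ne'
  -- expansion of tau
  have hmom : ∀ (n j k : ℕ), mom N lam c δ (j + k) (-(n : ℤ) + sb) n
      = ∑ m ∈ Finset.Icc 1 N, w m n * lam m ^ j * lam m ^ k := by
    intro n j k
    rw [mom]
    apply Finset.sum_congr rfl
    intro m hm
    have hl0 : lam m ≠ 0 := (hlampos m hm).ne'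
    have hprod : ∏ l ∈ Finset.range n, (lam m + δ l) = lam m ^ n * P m n := by
      rw [hP]
      have hc : lam m ^ n = ∏ _l ∈ Finset.range n, lam m := by
        rw [Finset.prod_const, Finset.card_range]
      rw [hc, ← Finset.prod_mul_distrib]
      apply Finset.prod_congr rfl
      intro l _
      field_simp
    have hzp : lam m ^ ((↑(j+k) : ℤ) + (-(n:ℤ) + sb)) * lam m ^ (n:ℕ)
        = lam m ^ sb * lam m ^ j * lam m ^ k := by
      rw [← zpow_natCast (lam m) n, ← zpow_natCast (lam m) j, ← zpow_natCast (lam m) k,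
        ← zpow_add₀ hl0, ← zpow_add₀ hl0, ← zpow_add₀ hl0]
      congr 1
      push_cast
      ring
    calc c m * lam m ^ ((↑(j+k):ℤ) + (-(n:ℤ)+sb)) * ∏ l ∈ Finset.range n, (lam m + δ l)
        = c m * (lam m ^ ((↑(j+k):ℤ) + (-(n:ℤ)+sb)) * lam m ^ (n:ℕ)) * P m n := by
          rw [hprod]; ring
      _ = c m * (lam m ^ sb * lam m ^ j * lam m ^ k) * P m n := by rw [hzp]
      _ = w m n * lam m ^ j * lam m ^ k := by rw [hw]; ring
  have htau : ∀ n : ℕ, tauH N lam c δ i (-(n : ℤ) + sb) n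
      = ∑ f ∈ Fintype.piFinset (fun _ : Fin i => Finset.Icc 1 N),
          (∏ j : Fin i, w (f j) n * lam (f j) ^ (j:ℕ)) *
            ∏ j : Fin i, ∏ k ∈ Finset.Ioi j, (lam (f k) - lam (f j)) := by
    intro n
    rw [tauH]
    have : (Matrix.of fun j k : Fin i => mom N lam c δ (j.1 + k.1) (-(n : ℤ) + sb) n)
        = (Matrix.of fun j k : Fin i => ∑ m ∈ Finset.Icc 1 N,
            (fun m => w m n) m * lam m ^ (j:ℕ) * lam m ^ (k:ℕ)) := by
      funext j k
      simp only [Matrix.of_apply]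
      exact hmom n j.1 k.1
    rw [this, prodA]
  -- V2 as square of Fin-indexed vandermonde
  have hV2fin : V2 = (∏ j : Fin i, ∏ k ∈ Finset.Ioi j, (lam (k.1+1) - lam (j.1+1)))^2 := by
    rw [hV2, ← Finset.prod_pow]
    simp only [← Finset.prod_pow]
    refine Finset.prod_bij' (i := fun (a : ℕ) (ha : a ∈ Finset.Icc 1 i) =>
          (⟨a - 1, by have := Finset.mem_Icc.mp ha; omega⟩ : Fin i))
        (j := fun (b : Fin i) _ => b.1 + 1) ?_ ?_ ?_ ?_ ?_
    · intro a ha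
      exact Finset.mem_univ _
    · intro b _
      have := b.isLt
      simp only [Finset.mem_Icc]
      omega
    · intro a ha
      have := Finset.mem_Icc.mp ha
      simp only []
      omega
    · intro b _
      have := b.isLt
      apply Fin.ext
      simp only []
      omega
    · intro a ha
      have ha' := Finset.mem_Icc.mp ha
      refine Finset.prod_bij' (i := fun (b : ℕ) (hb : b ∈ Finset.Icc (a+1) i) =>
          (⟨b - 1, by have := Finset.mem_Icc.mp hb; omega⟩ : Fin i))
        (j := fun (k : Fin i) _ => k.1 + 1) ?_ ?_ ?_ ?_ ?_
      · intro b hb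
        have := Finset.mem_Icc.mp hb
        simp only [Finset.mem_Ioi, Fin.lt_def]
        omega
      · intro k hk
        simp only [Finset.mem_Ioi, Fin.lt_def, Fin.val_mk] at hk
        have := k.isLt
        simp only [Finset.mem_Icc]
        omega
      · intro b hb
        have := Finset.mem_Icc.mp hb
        simp only []
        omega
      · intro k _
        have := k.isLt
        apply Fin.ext
        simp only []
        omega
      · intro b hb
        have hb' := Finset.mem_Icc.mp hb
        simp only []
        have h1 : b - 1 + 1 = b := by omega
        have h2 : a - 1 + 1 = a := by omega
        rw [h1, h2]
        ring
  have hV2pos : 0 < V2 := by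
    rw [hV2]
    apply Finset.prod_pos
    intro k hk
    apply Finset.prod_pos
    intro l hl
    have hk' : k ∈ Finset.Icc 1 N := hsub hk
    have hl' : l ∈ Finset.Icc 1 N := hsub (Finset.mem_Icc.mpr ⟨by
      have := (Finset.mem_Icc.mp hk).1; have := (Finset.mem_Icc.mp hl).1; omega,
      (Finset.mem_Icc.mp hl).2⟩)
    have hne : lam k ≠ lam l := hdist k hk' l hl' (by
      have := (Finset.mem_Icc.mp hl).1; omega)
    exact lt_of_le_of_ne (sq_nonneg _) (Ne.symm (pow_ne_zero 2 (sub_ne_zero.mpr hne)))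
  -- gram identity
  have hgram : ∑ f ∈ Fintype.piFinset (fun _ : Fin i => Finset.Icc 1 i),
      (∏ j : Fin i, lam (f j) ^ (j:ℕ)) *
        ∏ j : Fin i, ∏ k ∈ Finset.Ioi j, (lam (f k) - lam (f j)) = V2 := by
    have hsumIcc : ∀ g : ℕ → ℝ, ∑ m ∈ Finset.Icc 1 i, g m = ∑ r : Fin i, g (r.1 + 1) := by
      intro g
      refine Finset.sum_bij' (i := fun (a : ℕ) (ha : a ∈ Finset.Icc 1 i) =>
          (⟨a - 1, by have := Finset.mem_Icc.mp ha; omega⟩ : Fin i))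
        (j := fun (b : Fin i) _ => b.1 + 1) ?_ ?_ ?_ ?_ ?_
      · intro a ha
        exact Finset.mem_univ _
      · intro b _
        have := b.isLt
        simp only [Finset.mem_Icc]
        omega
      · intro a ha
        have := Finset.mem_Icc.mp ha
        simp only []
        omega
      · intro b _
        have := b.isLt
        apply Fin.ext
        simp only []
        omega
      · intro a ha
        have := Finset.mem_Icc.mp ha
        simp only []
        congr 1
        omega
    have h := prodA i lam (fun _ => (1:ℝ)) (Finset.Icc 1 i)
    simp only [one_mul] at h
    rw [← h]
    have hM : (Matrix.of fun j k : Fin i => ∑ m ∈ Finset.Icc 1 i, lam m ^ (j:ℕ) * lam m ^ (k:ℕ))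
        = Matrix.transpose (Matrix.vandermonde (fun r : Fin i => lam (r.1+1))) *
            Matrix.vandermonde (fun r : Fin i => lam (r.1+1)) := by
      ext j k
      rw [Matrix.mul_apply]
      simp only [Matrix.transpose_apply, Matrix.vandermonde_apply, Matrix.of_apply]
      rw [hsumIcc (fun m => lam m ^ (j:ℕ) * lam m ^ (k:ℕ))]
    rw [hM, Matrix.det_mul, Matrix.det_transpose, Matrix.det_vandermonde, hV2fin, sq]
  -- Vandermonde factor of a function
  set Vd : (Fin i → ℕ) → ℝ :=
    fun f => ∏ j : Fin i, ∏ k ∈ Finset.Ioi j, (lam (f k) - lam (f j)) with hVd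
  have hVdzero : ∀ f : Fin i → ℕ, ¬Function.Injective f → Vd f = 0 := by
    intro f hninj
    obtain ⟨a, b, hab, hne⟩ := Function.not_injective_iff.mp hninj
    rw [hVd]
    rcases (Ne.lt_or_gt hne) with h | h
    · exact Finset.prod_eq_zero (Finset.mem_univ a)
        (Finset.prod_eq_zero (Finset.mem_Ioi.mpr h) (by rw [hab, sub_self]))
    · exact Finset.prod_eq_zero (Finset.mem_univ b)
        (Finset.prod_eq_zero (Finset.mem_Ioi.mpr h) (by rw [hab, sub_self]))
  set F : Finset (Fin i → ℕ) := Fintype.piFinset (fun _ : Fin i => Finset.Icc 1 N) with hF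
  set L : (Fin i → ℕ) → ℝ := fun f =>
    if Finset.image f Finset.univ = Finset.Icc 1 i then
      ((∏ j : Fin i, lam (f j) ^ (j:ℕ)) * Vd f) / V2
    else 0 with hL
  -- per-f limits
  have hlimf : ∀ f ∈ F, Tendsto (fun n =>
      ((∏ j : Fin i, w (f j) n * lam (f j) ^ (j:ℕ)) * Vd f) /
        ((∏ k ∈ Finset.Icc 1 i, w k n) * V2)) atTop (nhds (L f)) := by
    intro f hf
    have hfmem : ∀ j, f j ∈ Finset.Icc 1 N := by
      intro j
      exact (Fintype.mem_piFinset.mp hf) j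
    have hWpos : ∀ n : ℕ, 0 < ∏ k ∈ Finset.Icc 1 i, w k n :=
      fun n => Finset.prod_pos (fun k hk => hwpos k (hsub hk) n)
    by_cases hinj : Function.Injective f
    · have hinjOn : ∀ a ∈ Finset.univ, ∀ b ∈ Finset.univ, f a = f b → a = b :=
        fun a _ b _ h => hinj h
      have himcard : (Finset.image f Finset.univ).card = i := by
        rw [Finset.card_image_of_injective _ hinj, Finset.card_univ, Fintype.card_fin]
      by_cases him : Finset.image f Finset.univ = Finset.Icc 1 i
      · have hconst : ∀ n : ℕ, ((∏ j : Fin i, w (f j) n * lam (f j) ^ (j:ℕ)) * Vd f) /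
            ((∏ k ∈ Finset.Icc 1 i, w k n) * V2)
            = ((∏ j : Fin i, lam (f j) ^ (j:ℕ)) * Vd f) / V2 := by
          intro n
          have h1 : ∏ j : Fin i, w (f j) n * lam (f j) ^ (j:ℕ)
              = (∏ j : Fin i, w (f j) n) * ∏ j : Fin i, lam (f j) ^ (j:ℕ) :=
            Finset.prod_mul_distrib
          have h2 : ∏ k ∈ Finset.Icc 1 i, w k n = ∏ j : Fin i, w (f j) n := by
            rw [← him]
            exact Finset.prod_image hinjOn
          rw [h1, ← h2, mul_assoc]
          exact mul_div_mul_left _ _ (hWpos n).ne'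
        have hLf : L f = ((∏ j : Fin i, lam (f j) ^ (j:ℕ)) * Vd f) / V2 := by
          simp only [hL]; exact if_pos him
        rw [hLf]
        simp only [hconst]
        exact tendsto_const_nhds
      · -- image ≠ Icc 1 i : limit 0
        have hLf : L f = 0 := by simp only [hL]; exact if_neg him
        rw [hLf]
        set S : Finset ℕ := Finset.image f Finset.univ with hS
        have hSsub : S ⊆ Finset.Icc 1 N := by
          intro m hm
          obtain ⟨j, _, rfl⟩ := Finset.mem_image.mp hm
          exact hfmem j
        set A : Finset ℕ := S \ Finset.Icc 1 i with hA
        set B : Finset ℕ := Finset.Icc 1 i \ S with hB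
        have hScard : S.card = i := himcard
        have hIcard : (Finset.Icc 1 i).card = i := by rw [Nat.card_Icc]; omega
        have hcardAB : A.card = B.card := by
          rw [hA, hB]
          exact Finset.card_sdiff_comm (by rw [hScard, hIcard])
        have hAne : A.Nonempty := by
          rw [Finset.nonempty_iff_ne_empty]
          intro hAe
          have hsub' : S ⊆ Finset.Icc 1 i := by
            rw [← Finset.sdiff_eq_empty_iff_subset]; exact hAe
          exact him (Finset.eq_of_subset_of_card_le hsub' (by rw [hScard, hIcard]))
        set e := Finset.equivOfCardEq hcardAB with he
        -- pointwise decomposition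
        have hsplitn : ∀ n : ℕ, ((∏ j : Fin i, w (f j) n * lam (f j) ^ (j:ℕ)) * Vd f) /
            ((∏ k ∈ Finset.Icc 1 i, w k n) * V2)
            = ((∏ j : Fin i, w (f j) n) / (∏ k ∈ Finset.Icc 1 i, w k n)) *
              (((∏ j : Fin i, lam (f j) ^ (j:ℕ)) * Vd f) / V2) := by
          intro n
          rw [Finset.prod_mul_distrib, mul_assoc, mul_div_mul_comm]
        have hCpos : ∀ n : ℕ, (0:ℝ) < ∏ m ∈ S ∩ Finset.Icc 1 i, w m n := by
          intro n
          exact Finset.prod_pos (fun m hm => hwpos m (hSsub (Finset.mem_inter.mp hm).1) n)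
        have hratio_eq : ∀ n : ℕ, (∏ j : Fin i, w (f j) n) / (∏ k ∈ Finset.Icc 1 i, w k n)
            = ∏ x ∈ A.attach, (w x.1 n / w (e x).1 n) := by
          intro n
          have h1 : ∏ j : Fin i, w (f j) n
              = (∏ m ∈ A, w m n) * ∏ m ∈ S ∩ Finset.Icc 1 i, w m n := by
            rw [← Finset.prod_image hinjOn (g := f) (f := fun m => w m n), ← hS,
              ← Finset.prod_sdiff (Finset.inter_subset_left : S ∩ Finset.Icc 1 i ⊆ S),
              Finset.sdiff_inter_self_left, ← hA]
          have h2 : ∏ k ∈ Finset.Icc 1 i, w k n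
              = (∏ m ∈ B, w m n) * ∏ m ∈ S ∩ Finset.Icc 1 i, w m n := by
            rw [← Finset.prod_sdiff
                (Finset.inter_subset_right : S ∩ Finset.Icc 1 i ⊆ Finset.Icc 1 i),
              Finset.sdiff_inter_self_right, ← hB]
          rw [h1, h2, mul_div_mul_right _ _ (hCpos n).ne']
          have h3 : ∏ m ∈ B, w m n = ∏ x ∈ A.attach, w (e x).1 n := by
            rw [← Finset.prod_attach B (fun m => w m n), ← Finset.univ_eq_attach,
              ← Finset.univ_eq_attach]
            exact (Equiv.prod_comp e (fun y : {x // x ∈ B} => w y.1 n)).symm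
          have h4 : ∏ m ∈ A, w m n = ∏ x ∈ A.attach, w x.1 n :=
            (Finset.prod_attach A (fun m => w m n)).symm
          rw [h3, h4, ← Finset.prod_div_distrib]
        have hfactor : ∀ x : {m // m ∈ A},
            Tendsto (fun n => w x.1 n / w (e x).1 n) atTop (nhds 0) := by
          intro x
          have hxA : x.1 ∈ A := x.2
          have hxS : x.1 ∈ S := (Finset.mem_sdiff.mp hxA).1
          have hxN : x.1 ∈ Finset.Icc 1 N := hSsub hxS
          have hxnot : x.1 ∉ Finset.Icc 1 i := (Finset.mem_sdiff.mp hxA).2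
          have hxgt : i < x.1 := by
            have h1 := (Finset.mem_Icc.mp hxN).1
            by_contra h
            exact hxnot (Finset.mem_Icc.mpr ⟨h1, by omega⟩)
          have hyB : (e x).1 ∈ B := (e x).2
          have hyIcc : (e x).1 ∈ Finset.Icc 1 i := (Finset.mem_sdiff.mp hyB).1
          have hyN : (e x).1 ∈ Finset.Icc 1 N := hsub hyIcc
          have hlt : (e x).1 < x.1 := by
            have := (Finset.mem_Icc.mp hyIcc).2
            omega
          have heqn : ∀ n : ℕ, w x.1 n / w (e x).1 n
              = (c x.1 * lam x.1 ^ sb / (c (e x).1 * lam (e x).1 ^ sb)) *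
                (P x.1 n / P (e x).1 n) := by
            intro n
            rw [hw]
            exact mul_div_mul_comm _ _ _ _
          simp only [heqn]
          have := (hPratio x.1 hxN (e x).1 hyN hlt).const_mul
            (c x.1 * lam x.1 ^ sb / (c (e x).1 * lam (e x).1 ^ sb))
          simpa using this
        have hprod0 : Tendsto (fun n => ∏ x ∈ A.attach, (w x.1 n / w (e x).1 n))
            atTop (nhds 0) := by
          have := tendsto_finset_prod (f := fun (x : {m // m ∈ A}) (n : ℕ) =>
              w x.1 n / w (e x).1 n) (a := fun _ => (0:ℝ)) (x := atTop) A.attach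
            (fun x _ => hfactor x)
          have hz : ∏ x ∈ A.attach, (0:ℝ) = 0 := by
            obtain ⟨a, ha⟩ := hAne
            exact Finset.prod_eq_zero (Finset.mem_attach A ⟨a, ha⟩) rfl
          rwa [hz] at this
        simp only [hsplitn, hratio_eq]
        have := hprod0.mul_const (((∏ j : Fin i, lam (f j) ^ (j:ℕ)) * Vd f) / V2)
        simpa using this
    · -- non-injective: everything is zero
      have hVd0 : Vd f = 0 := hVdzero f hinj
      have hLf : L f = 0 := by
        simp only [hL]
        split <;> simp [hVd0]
      rw [hLf]
      simp only [hVd0, mul_zero, zero_div]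
      exact tendsto_const_nhds
  -- sum of the limits is 1
  have hsum1 : ∑ f ∈ F, L f = 1 := by
    have hstep1 : ∑ f ∈ F, L f
        = ∑ f ∈ F.filter (fun f => Finset.image f Finset.univ = Finset.Icc 1 i),
            ((∏ j : Fin i, lam (f j) ^ (j:ℕ)) * Vd f) / V2 := by
      rw [Finset.sum_filter]
    have hstep2 : F.filter (fun f => Finset.image f Finset.univ = Finset.Icc 1 i)
        = (Fintype.piFinset (fun _ : Fin i => Finset.Icc 1 i)).filter
            (fun f => Finset.image f Finset.univ = Finset.Icc 1 i) := by
      apply Finset.ext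
      intro f
      simp only [Finset.mem_filter]
      constructor
      · rintro ⟨_, him⟩
        refine ⟨Fintype.mem_piFinset.mpr (fun j => ?_), him⟩
        rw [← him]
        exact Finset.mem_image_of_mem f (Finset.mem_univ j)
      · rintro ⟨hmem, him⟩
        refine ⟨Fintype.mem_piFinset.mpr (fun j => hsub ((Fintype.mem_piFinset.mp hmem) j)), him⟩
    have hIcard : (Finset.Icc 1 i).card = i := by rw [Nat.card_Icc]; omega
    have hstep3 : ∑ f ∈ (Fintype.piFinset (fun _ : Fin i => Finset.Icc 1 i)).filter
            (fun f => Finset.image f Finset.univ = Finset.Icc 1 i),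
          ((∏ j : Fin i, lam (f j) ^ (j:ℕ)) * Vd f) / V2
        = ∑ f ∈ Fintype.piFinset (fun _ : Fin i => Finset.Icc 1 i),
          ((∏ j : Fin i, lam (f j) ^ (j:ℕ)) * Vd f) / V2 := by
      apply Finset.sum_subset (Finset.filter_subset _ _)
      intro f hf hnf
      have him : ¬ (Finset.image f Finset.univ = Finset.Icc 1 i) := by
        intro h
        exact hnf (Finset.mem_filter.mpr ⟨hf, h⟩)
      have hninj : ¬ Function.Injective f := by
        intro hinj
        apply him
        apply Finset.eq_of_subset_of_card_le
        · intro m hm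
          obtain ⟨j, _, rfl⟩ := Finset.mem_image.mp hm
          exact (Fintype.mem_piFinset.mp hf) j
        · rw [hIcard, Finset.card_image_of_injective _ hinj, Finset.card_univ,
            Fintype.card_fin]
      rw [hVdzero f hninj, mul_zero, zero_div]
    rw [hstep1, hstep2, hstep3, ← Finset.sum_div, hgram, div_self hV2pos.ne']
  -- assemble
  have hfun : (fun n : ℕ =>
      tauH N lam c δ i (-(n : ℤ) + sb) n /
        ((∏ k ∈ Finset.Icc 1 i,
            (c k * lam k ^ sb * ∏ l ∈ Finset.range n, (1 + δ l / lam k))) *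
          ∏ k ∈ Finset.Icc 1 i, ∏ l ∈ Finset.Icc (k + 1) i, (lam k - lam l) ^ 2))
      = fun n : ℕ => ∑ f ∈ F, ((∏ j : Fin i, w (f j) n * lam (f j) ^ (j:ℕ)) * Vd f) /
          ((∏ k ∈ Finset.Icc 1 i, w k n) * V2) := by
    funext n
    have hden : (∏ k ∈ Finset.Icc 1 i,
        (c k * lam k ^ sb * ∏ l ∈ Finset.range n, (1 + δ l / lam k))) *
          ∏ k ∈ Finset.Icc 1 i, ∏ l ∈ Finset.Icc (k + 1) i, (lam k - lam l) ^ 2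
        = (∏ k ∈ Finset.Icc 1 i, w k n) * V2 := rfl
    rw [hden, htau n, Finset.sum_div]
  rw [hfun, show (1:ℝ) = ∑ f ∈ F, L f from hsum1.symm]
  exact tendsto_finset_sum F hlimf
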